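/- Let Θ be a finite simple graph with vertex set V of cardinality n ≥ 1, and suppose that every vertex of the complementary graph Θ̄ has degree at most c₀ ≥ 1. Let A(Θ) be the associated right-angled Artin group with standard generating set S = {s_v : v ∈ V}. Then for every positive integer R there is an injection of B_R(A(Θ), S) into W_R(n, c₀); in particular #B_R(A(Θ), S) ≤ #W_R(n, c₀). -/

import Mathlib

/-- The ball of radius `R` in a group `G` relative to a subset `S`:
elements expressible as products of at most `R` elements of `S ∪ S⁻¹`. -/
def ball {G : Type*} [Group G] (S : Set G) (R : ℕ) : Set G :=
  {g | ∃ l : List G, l.length ≤ R ∧ (∀ t ∈ l, t ∈ S ∪ S⁻¹) ∧ l.prod = g}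

/-- The commutator relators of the right-angled Artin group on a simple graph `Θ`. -/
def raagRels {V : Type*} (Θ : SimpleGraph V) : Set (FreeGroup V) :=
  {r | ∃ v w, Θ.Adj v w ∧
    r = FreeGroup.of v * FreeGroup.of w * (FreeGroup.of v)⁻¹ * (FreeGroup.of w)⁻¹}

/-- The right-angled Artin group `A(Θ)` associated to a simple graph `Θ`. -/
abbrev RAAG {V : Type*} (Θ : SimpleGraph V) : Type _ := PresentedGroup (raagRels Θ)

/-- The standard generating set `S = {s_v : v ∈ V}` of `A(Θ)`. -/
def raagGens {V : Type*} (Θ : SimpleGraph V) : Set (RAAG Θ) :=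
  Set.range (PresentedGroup.of (rels := raagRels Θ))

/-- `D_R = {±1, ±2, …, ±C_R, C_R + 1} ⊆ ℤ` where `C_R = n + c₀ R`. -/
def DSet (n c₀ R : ℕ) : Set ℤ :=
  {x | (1 ≤ |x| ∧ |x| ≤ (n : ℤ) + c₀ * R) ∨ x = (n : ℤ) + c₀ * R + 1}

/-- `W_R(n, c₀)`: sequences `(ℓ_1, …, ℓ_R)` with entries in `D_R` whose absolute
values are nondecreasing. -/
def WSet (n c₀ R : ℕ) : Set (Fin R → ℤ) :=
  {ℓ | (∀ i, ℓ i ∈ DSet n c₀ R) ∧ ∀ i j : Fin R, i ≤ j → |ℓ i| ≤ |ℓ j|}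

namespace RaagProof
open List

variable {V : Type*} [DecidableEq V]

/-- One step of index bookkeeping: filtering out at most the `!q` elements
moves `u` earlier by at most the number of removed elements. -/
theorem indexOf_le_filter (q : V → Bool) :
    ∀ (l : List V) (u : V), u ∈ l → q u = true →
      l.idxOf u ≤ (l.filter q).idxOf u + (l.filter fun x => !(q x)).length := by
  intro l
  induction l with
  | nil => intro u hu; simp at hu
  | cons x xs ih =>
    intro u hu hq
    by_cases hxu : x = u
    · subst hxu
      simp [List.idxOf_cons_self]
    · rw [List.idxOf_cons_ne _ (by exact hxu)]
      cases hqx : q x with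
      | false =>
        rw [List.filter_cons_of_neg (by simp [hqx]), List.filter_cons_of_pos (by simp [hqx])]
        have := ih u ((List.mem_cons.mp hu).resolve_left (fun h => hxu h.symm)) hq
        simp only [List.length_cons]
        omega
      | true =>
        rw [List.filter_cons_of_pos (by simp [hqx]), List.filter_cons_of_neg (by simp [hqx]),
          List.idxOf_cons_ne _ (by exact hxu)]
        have := ih u ((List.mem_cons.mp hu).resolve_left (fun h => hxu h.symm)) hq
        omega

variable (Nb : V → V → Bool)

/-- Update of the labelling list: move all `Nb v`-neighbours of `v`
to the position just before `v`. -/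
def update (l : List V) (v : V) : List V :=
  (l.filter fun u => !(Nb v u)).take ((l.filter fun u => !(Nb v u)).idxOf v)
    ++ ((l.filter fun u => Nb v u)
    ++ (l.filter fun u => !(Nb v u)).drop ((l.filter fun u => !(Nb v u)).idxOf v))

theorem update_perm (l : List V) (v : V) : update Nb l v ~ l := by
  unfold update
  set A := l.filter fun u => !(Nb v u) with hA
  set M := l.filter fun u => Nb v u with hM
  set p := A.idxOf v
  calc A.take p ++ (M ++ A.drop p) ~ M ++ (A.take p ++ A.drop p) :=
        List.perm_append_comm_assoc _ _ _
    _ = M ++ A := by rw [List.take_append_drop]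
    _ ~ l := List.filter_append_perm _ l




section UpdateBounds

variable {l : List V} {v : V}

/-- `v` stays put, non-neighbours move down by at most the number of neighbours. -/
theorem le_update_indexOf_of_not_nb {u : V} (hu : u ∈ l) (hnb : Nb v u = false) :
    l.idxOf u ≤ (update Nb l v).idxOf u + (l.filter fun x => Nb v x).length := by
  classical
  set A := l.filter fun x => !(Nb v x) with hA
  set M := l.filter fun x => Nb v x with hM
  have huA : u ∈ A := by
    rw [hA, List.mem_filter]; exact ⟨hu, by simp [hnb]⟩
  have hbase : l.idxOf u ≤ A.idxOf u + M.length := by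
    have := indexOf_le_filter (fun x => !(Nb v x)) l u hu (by simp [hnb])
    simpa [hA, hM] using this
  set p := A.idxOf v with hp
  have hsplit : A.take p ++ A.drop p = A := List.take_append_drop _ _
  have hup : update Nb l v = A.take p ++ (M ++ A.drop p) := rfl
  -- index of u in A relative to take/drop decomposition
  by_cases hut : u ∈ A.take p
  · have h1 : (update Nb l v).idxOf u = (A.take p).idxOf u := by
      rw [hup, List.idxOf_append_of_mem hut]
    have h2 : A.idxOf u = (A.take p).idxOf u := by
      conv_lhs => rw [← hsplit]
      rw [List.idxOf_append_of_mem hut]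
    omega
  · have hud : u ∈ A.drop p := by
      have := hsplit ▸ huA
      rcases List.mem_append.mp this with h | h
      · exact absurd h hut
      · exact h
    have huM : u ∉ M := by
      rw [hM, List.mem_filter]; simp [hnb]
    have h1 : (update Nb l v).idxOf u
        = (A.take p).length + (M.length + (A.drop p).idxOf u) := by
      rw [hup, List.idxOf_append_of_notMem hut, List.idxOf_append_of_notMem huM]
    have h2 : A.idxOf u = (A.take p).length + (A.drop p).idxOf u := by
      conv_lhs => rw [← hsplit]
      rw [List.idxOf_append_of_notMem hut]
    omega

/-- neighbours of `v` land just before `v`'s old (filtered) position. -/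
theorem le_update_indexOf_of_nb (hv : v ∈ l) (hvv : Nb v v = false) {u : V} (hu : u ∈ l) (hnb : Nb v u = true) :
    l.idxOf v ≤ (update Nb l v).idxOf u + (l.filter fun x => Nb v x).length := by
  classical
  set A := l.filter fun x => !(Nb v x) with hA
  set M := l.filter fun x => Nb v x with hM
  have hvA : v ∈ A := by rw [hA, List.mem_filter]; exact ⟨hv, by simp [hvv]⟩
  have hbase : l.idxOf v ≤ A.idxOf v + M.length := by
    have := indexOf_le_filter (fun x => !(Nb v x)) l v hv (by simp [hvv])
    simpa [hA, hM] using this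
  set p := A.idxOf v with hp
  have hplt : p < A.length := List.idxOf_lt_length_iff.mpr hvA
  have huA : u ∉ A := by
    rw [hA, List.mem_filter]; simp [hnb]
  have hut : u ∉ A.take p := fun h => huA (List.mem_of_mem_take h)
  have h1 : (update Nb l v).idxOf u
      = (A.take p).length + (M ++ A.drop p).idxOf u := by
    rw [show update Nb l v = A.take p ++ (M ++ A.drop p) from rfl,
      List.idxOf_append_of_notMem hut]
  have h2 : (A.take p).length = p := by
    rw [List.length_take]; omega
  omega

end UpdateBounds


section Greedy

/-- A letter that can be brought to the front of the word by commutations. -/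
def Cand (w : List (V × Bool)) (t : V × Bool) : Prop :=
  ∃ a b, w = a ++ t :: b ∧ ∀ x ∈ a, Nb x.1 t.1 = false

theorem pickSpec (l : List V) (w : List (V × Bool)) (hw : w ≠ []) :
    ∃ s : (V × Bool) × List (V × Bool) × List (V × Bool),
      w = s.2.1 ++ s.1 :: s.2.2 ∧ (∀ x ∈ s.2.1, Nb x.1 s.1.1 = false) ∧
      ∀ t', Cand Nb w t' → l.idxOf s.1.1 ≤ l.idxOf t'.1 := by
  classical
  obtain ⟨t₀, w₀, rfl⟩ := List.exists_cons_of_ne_nil hw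
  set S : Set ℕ := {k | ∃ t, Cand Nb (t₀ :: w₀) t ∧ l.idxOf t.1 = k} with hS
  have hne : S.Nonempty := ⟨l.idxOf t₀.1, t₀, ⟨[], w₀, rfl, by simp⟩, rfl⟩
  obtain ⟨k, ⟨t, ht, hk⟩, hmin⟩ := Nat.lt_wfRel.wf.has_min S hne
  obtain ⟨a, b, heq, hcomm⟩ := ht
  refine ⟨(t, a, b), heq, hcomm, fun t' ht' => ?_⟩
  have hmem : l.idxOf t'.1 ∈ S := ⟨t', ht', rfl⟩
  have h2 := hmin _ hmem
  rw [← hk] at h2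
  simpa [Nat.lt_wfRel, WellFoundedRelation.rel, not_lt] using h2

/-- The greedy rewriting: repeatedly extract a candidate letter whose vertex has
the least current label, then update the labelling. -/
noncomputable def greedy (l : List V) (w : List (V × Bool)) : List (V × Bool) :=
  if hw : w = [] then [] else
    let s := (pickSpec Nb l w hw).choose
    s.1 :: greedy (update Nb l s.1.1) (s.2.1 ++ s.2.2)
termination_by w.length
decreasing_by
  have h := congrArg List.length (pickSpec Nb l w hw).choose_spec.1
  simp only [List.length_append, List.length_cons] at h ⊢
  omega

@[simp] theorem greedy_nil (l : List V) : greedy Nb l [] = [] := by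
  rw [greedy]; simp

theorem greedy_cons (l : List V) (w : List (V × Bool)) (hw : w ≠ []) :
    ∃ t a b, w = a ++ t :: b ∧ (∀ x ∈ a, Nb x.1 t.1 = false) ∧
      (∀ t', Cand Nb w t' → l.idxOf t.1 ≤ l.idxOf t'.1) ∧
      greedy Nb l w = t :: greedy Nb (update Nb l t.1) (a ++ b) := by
  obtain ⟨h1, h2, h3⟩ := (pickSpec Nb l w hw).choose_spec
  exact ⟨_, _, _, h1, h2, h3, by rw [greedy, dif_neg hw]⟩

theorem greedy_length (l : List V) (w : List (V × Bool)) :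
    (greedy Nb l w).length = w.length := by
  by_cases hw : w = []
  · subst hw; simp
  · obtain ⟨t, a, b, heq, -, -, hg⟩ := greedy_cons Nb l w hw
    rw [hg, heq]
    have : (a ++ b).length < w.length := by rw [heq]; simp [List.length_append]
    rw [List.length_cons, greedy_length (update Nb l t.1) (a ++ b)]
    simp [List.length_append]; omega
termination_by w.length
decreasing_by
  have h := congrArg List.length heq
  simp only [List.length_append, List.length_cons] at h ⊢
  omega

end Greedy

section CandKey

/-- Transfer of candidacy from the reduced word back to the original word. -/
theorem cand_transfer {t t' : V × Bool} {a b : List (V × Bool)}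
    (hNb : Nb t.1 t'.1 = false) (ht' : Cand Nb (a ++ b) t') :
    Cand Nb (a ++ t :: b) t' := by
  obtain ⟨a', b', heq, hcomm⟩ := ht'
  rcases List.append_eq_append_iff.mp heq with ⟨c, hc1, hc2⟩ | ⟨c, hc1, hc2⟩
  · -- a' = a ++ c, b = c ++ t' :: b'  (t' occurs in b)
    refine ⟨a ++ t :: c, b', by rw [hc2]; simp, fun x hx => ?_⟩
    rcases List.mem_append.mp hx with h | h
    · exact hcomm x (by rw [hc1]; exact List.mem_append.mpr (Or.inl h))
    · rcases List.mem_cons.mp h with h | h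
      · subst h; exact hNb
      · exact hcomm x (by rw [hc1]; exact List.mem_append.mpr (Or.inr h))
  · -- a = a' ++ c, t' :: b' = c ++ b
    cases c with
    | nil =>
      simp only [List.nil_append] at hc2
      refine ⟨a' ++ [t], b', by rw [hc1, ← hc2]; simp, fun x hx => ?_⟩
      rcases List.mem_append.mp hx with h | h
      · exact hcomm x h
      · rcases List.mem_singleton.mp h with rfl
        exact hNb
    | cons y c' =>
      rw [List.cons_append] at hc2
      injection hc2 with h1 h2
      subst h1
      refine ⟨a', c' ++ t :: b, by rw [hc1]; simp, fun x hx => hcomm x (by simp [hx])⟩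


theorem key (c₀ : ℕ) (HD : ∀ (v : V) (l : List V), l.Nodup → (l.filter fun u => Nb v u).length ≤ c₀)
    (Hirr : ∀ v, Nb v v = false) {l : List V} (hnd : l.Nodup) (hcm : ∀ x : V, x ∈ l)
    {t t' : V × Bool} {a b : List (V × Bool)}
    (hmin : ∀ s, Cand Nb (a ++ t :: b) s → l.idxOf t.1 ≤ l.idxOf s.1)
    (ht' : Cand Nb (a ++ b) t') :
    l.idxOf t.1 ≤ (update Nb l t.1).idxOf t'.1 + c₀ := by
  have hM := HD t.1 l hnd
  cases hNb : Nb t.1 t'.1 with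
  | true =>
    have := le_update_indexOf_of_nb Nb (hcm t.1) (Hirr t.1) (hcm t'.1) hNb
    omega
  | false =>
    have h1 := hmin t' (cand_transfer Nb hNb ht')
    have h2 := le_update_indexOf_of_not_nb Nb (hcm t'.1) hNb
    omega

end CandKey

section Enc

/-- The integer encoding of a word, relative to an evolving labelling list. -/
noncomputable def encList (c₀ : ℕ) : List V → ℕ → List (V × Bool) → List ℤ
  | _, _, [] => []
  | l, j, t :: w =>
      ((cond t.2 1 (-1) : ℤ) * ((l.idxOf t.1 : ℤ) + 1 + c₀ * j))
        :: encList c₀ (update Nb l t.1) (j + 1) w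

theorem abs_sign_mul (ε : Bool) (m : ℤ) (hm : 0 ≤ m) : |(cond ε 1 (-1) : ℤ) * m| = m := by
  cases ε <;> simp [abs_mul, abs_of_nonneg hm]

theorem encList_length (c₀ : ℕ) (l : List V) (j : ℕ) (w : List (V × Bool)) :
    (encList Nb c₀ l j w).length = w.length := by
  induction w generalizing l j with
  | nil => rfl
  | cons t w ih => simp [encList, ih]

theorem encList_bounds (c₀ n : ℕ) (w : List (V × Bool)) :
    ∀ (l : List V) (j : ℕ), l.Nodup → (∀ x : V, x ∈ l) → l.length = n →
      ∀ x ∈ encList Nb c₀ l j w, 1 ≤ |x| ∧ |x| ≤ (n : ℤ) + c₀ * (j + w.length) := by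
  induction w with
  | nil => intro l j _ _ _ x hx; simp [encList] at hx
  | cons t w ih =>
    intro l j hnd hcm hln x hx
    rcases List.mem_cons.mp hx with rfl | hx
    · have hidx : l.idxOf t.1 < n := hln ▸ List.idxOf_lt_length_iff.mpr (hcm t.1)
      have h0 : (0 : ℤ) ≤ (l.idxOf t.1 : ℤ) + 1 + c₀ * j := by positivity
      rw [abs_sign_mul _ _ h0]
      have hcj : (0 : ℤ) ≤ (c₀ : ℤ) * j := by positivity
      have hle : (l.idxOf t.1 : ℤ) + 1 ≤ n := by exact_mod_cast hidx
      have hc : (c₀ : ℤ) * j ≤ (c₀ : ℤ) * (j + (w.length + 1)) := by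
        have hj : (j : ℤ) ≤ (j : ℤ) + ((w.length : ℤ) + 1) := by omega
        exact mul_le_mul_of_nonneg_left hj (by positivity)
      constructor
      · linarith
      · simp only [List.length_cons]
        push_cast
        linarith
    · have hnd' : (update Nb l t.1).Nodup := ((update_perm Nb l t.1).nodup_iff).mpr hnd
      have hcm' : ∀ x : V, x ∈ update Nb l t.1 :=
        fun x => ((update_perm Nb l t.1).mem_iff).mpr (hcm x)
      have hln' : (update Nb l t.1).length = n := by
        rw [(update_perm Nb l t.1).length_eq, hln]
      have hih := ih (update Nb l t.1) (j + 1) hnd' hcm' hln' x hx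
      refine ⟨hih.1, le_trans hih.2 (le_of_eq ?_)⟩
      simp only [List.length_cons]
      push_cast
      ring

theorem encList_inj (c₀ : ℕ) (w₁ : List (V × Bool)) :
    ∀ (w₂ : List (V × Bool)) (l : List V) (j : ℕ), l.Nodup → (∀ x : V, x ∈ l) →
      encList Nb c₀ l j w₁ = encList Nb c₀ l j w₂ → w₁ = w₂ := by
  induction w₁ with
  | nil =>
    intro w₂ l j _ _ h
    cases w₂ with
    | nil => rfl
    | cons t w => simp [encList] at h
  | cons t w ih =>
    intro w₂ l j hnd hcm h
    cases w₂ with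
    | nil => simp [encList] at h
    | cons t' w' =>
      simp only [encList, List.cons.injEq] at h
      obtain ⟨hhead, htail⟩ := h
      have h0 : (0 : ℤ) ≤ (l.idxOf t.1 : ℤ) + 1 + c₀ * j := by positivity
      have h0' : (0 : ℤ) ≤ (l.idxOf t'.1 : ℤ) + 1 + c₀ * j := by positivity
      have habs : (l.idxOf t.1 : ℤ) + 1 + c₀ * j = (l.idxOf t'.1 : ℤ) + 1 + c₀ * j := by
        have := congrArg abs hhead
        rwa [abs_sign_mul _ _ h0, abs_sign_mul _ _ h0'] at this
      have hidx : l.idxOf t.1 = l.idxOf t'.1 := by exact_mod_cast (by omega : (l.idxOf t.1 : ℤ) = l.idxOf t'.1)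
      have hv : t.1 = t'.1 := (List.idxOf_inj (hcm t.1)).mp hidx
      have hsgn : t.2 = t'.2 := by
        have hidx0 : (0 : ℤ) ≤ (l.idxOf t'.1 : ℤ) := Int.natCast_nonneg _
        have hcj : (0 : ℤ) ≤ (c₀ : ℤ) * (j : ℤ) := by positivity
        rcases Bool.eq_false_or_eq_true t.2 with hb | hb <;>
          rcases Bool.eq_false_or_eq_true t'.2 with hb' | hb' <;>
            rw [hb, hb'] <;> exfalso <;>
            simp only [hb, hb', cond_true, cond_false, one_mul, neg_one_mul, neg_mul] at hhead <;>
            linarith [habs]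
      have ht : t = t' := Prod.ext hv hsgn
      subst ht
      have hnd' : (update Nb l t.1).Nodup := ((update_perm Nb l t.1).nodup_iff).mpr hnd
      have hcm' : ∀ x : V, x ∈ update Nb l t.1 :=
        fun x => ((update_perm Nb l t.1).mem_iff).mpr (hcm x)
      rw [ih w' (update Nb l t.1) (j + 1) hnd' hcm' htail]

theorem greedy_chain (c₀ : ℕ)
    (HD : ∀ (v : V) (l : List V), l.Nodup → (l.filter fun u => Nb v u).length ≤ c₀)
    (Hirr : ∀ v, Nb v v = false) :
    ∀ (N : ℕ) (w : List (V × Bool)) (l : List V) (j : ℕ), w.length ≤ N →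
      l.Nodup → (∀ x : V, x ∈ l) →
      List.IsChain (fun x y : ℤ => |x| ≤ |y|) (encList Nb c₀ l j (greedy Nb l w)) := by
  intro N
  induction N with
  | zero =>
    intro w l j hlen _ _
    have : w = [] := List.eq_nil_of_length_eq_zero (Nat.le_zero.mp hlen)
    subst this
    simp [encList]
  | succ N ih =>
    intro w l j hlen hnd hcm
    by_cases hw : w = []
    · subst hw; simp [encList]
    · obtain ⟨t, a, b, heq, hcommA, hmin, hg⟩ := greedy_cons Nb l w hw
      have hnd' : (update Nb l t.1).Nodup := ((update_perm Nb l t.1).nodup_iff).mpr hnd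
      have hcm' : ∀ x : V, x ∈ update Nb l t.1 :=
        fun x => ((update_perm Nb l t.1).mem_iff).mpr (hcm x)
      have hlen' : (a ++ b).length ≤ N := by
        have hle := congrArg List.length heq
        simp only [List.length_append, List.length_cons] at hle
        simp only [List.length_append]
        omega
      have htail := ih (a ++ b) (update Nb l t.1) (j + 1) hlen' hnd' hcm'
      rw [hg]
      simp only [encList]
      rw [List.isChain_cons]
      refine ⟨?_, htail⟩
      intro y hy
      by_cases hab : a ++ b = []
      · rw [hab] at hy; simp [encList] at hy
      · obtain ⟨t', a', b', heq', hcommA', hmin', hg'⟩ :=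
          greedy_cons Nb (update Nb l t.1) (a ++ b) hab
        rw [hg'] at hy
        simp only [encList, List.head?_cons, Option.mem_some_iff] at hy
        subst hy
        rw [heq] at hmin
        have hkey := key Nb c₀ HD Hirr hnd hcm hmin ⟨a', b', heq', hcommA'⟩
        have h0 : (0 : ℤ) ≤ (l.idxOf t.1 : ℤ) + 1 + c₀ * j := by positivity
        have h0' : (0 : ℤ) ≤ ((update Nb l t.1).idxOf t'.1 : ℤ) + 1 + (c₀ : ℤ) * ((j : ℤ) + 1) := by
          positivity
        push_cast
        rw [abs_sign_mul _ _ h0, abs_sign_mul _ _ h0']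
        have hk : (l.idxOf t.1 : ℤ) ≤ (update Nb l t.1).idxOf t'.1 + c₀ := by
          exact_mod_cast hkey
        have hexp : (c₀ : ℤ) * ((j : ℤ) + 1) = (c₀ : ℤ) * j + c₀ := by ring
        push_cast
        linarith

end Enc

section Group

variable {G : Type*} [Group G] (ι : V × Bool → G)

/-- Product of a word of letters. -/
def wprod (w : List (V × Bool)) : G := (w.map ι).prod

theorem wprod_extract (hcomm : ∀ p q : V × Bool, Nb p.1 q.1 = false → ι p * ι q = ι q * ι p)
    (t : V × Bool) (b : List (V × Bool)) :
    ∀ a : List (V × Bool), (∀ x ∈ a, Nb x.1 t.1 = false) →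
      wprod ι (a ++ t :: b) = ι t * wprod ι (a ++ b) := by
  intro a
  induction a with
  | nil => intro _; simp [wprod]
  | cons x a ih =>
    intro h
    have hx := h x List.mem_cons_self
    have ha := fun y hy => h y (List.mem_cons_of_mem _ hy)
    simp only [List.cons_append, wprod, List.map_cons, List.prod_cons] at *
    rw [ih ha, ← mul_assoc, hcomm x t hx, mul_assoc]

theorem greedy_wprod (hcomm : ∀ p q : V × Bool, Nb p.1 q.1 = false → ι p * ι q = ι q * ι p)
    (l : List V) (w : List (V × Bool)) :
    wprod ι (greedy Nb l w) = wprod ι w := by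
  by_cases hw : w = []
  · subst hw; simp
  · obtain ⟨t, a, b, heq, hcommA, -, hg⟩ := greedy_cons Nb l w hw
    rw [hg, heq]
    have hlt : (a ++ b).length < w.length := by
      have hle := congrArg List.length heq
      simp only [List.length_append, List.length_cons] at hle
      simp only [List.length_append]
      omega
    calc wprod ι (t :: greedy Nb (update Nb l t.1) (a ++ b))
        = ι t * wprod ι (greedy Nb (update Nb l t.1) (a ++ b)) := by
          simp [wprod]
      _ = ι t * wprod ι (a ++ b) := by
          rw [greedy_wprod hcomm (update Nb l t.1) (a ++ b)]
      _ = wprod ι (a ++ t :: b) := (wprod_extract Nb ι hcomm t b a hcommA).symm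
termination_by w.length
decreasing_by
  have hle := congrArg List.length heq
  simp only [List.length_append, List.length_cons] at hle ⊢
  omega

end Group


section RAAG

variable {V : Type*}

/-- The noncommuting relation as a `Bool`-valued function (classical). -/
noncomputable def NbG (Θ : SimpleGraph V) : V → V → Bool := fun v u =>
  @decide (Θᶜ.Adj v u) (Classical.propDecidable _)

theorem NbG_false_iff (Θ : SimpleGraph V) (v u : V) : NbG Θ v u = false ↔ ¬ Θᶜ.Adj v u := by
  unfold NbG
  rcases Classical.em (Θᶜ.Adj v u) with h | h
  · simp [h]
  · simp [h]

theorem NbG_true_iff (Θ : SimpleGraph V) (v u : V) : NbG Θ v u = true ↔ Θᶜ.Adj v u := by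
  rw [← not_iff_not, Bool.not_eq_true, NbG_false_iff]

theorem NbG_irrefl (Θ : SimpleGraph V) (v : V) : NbG Θ v v = false :=
  (NbG_false_iff Θ v v).mpr (Θᶜ.irrefl)

/-- The letters map to the RAAG. -/
noncomputable def raagLtr (Θ : SimpleGraph V) : V × Bool → RAAG Θ := fun t =>
  cond t.2 (PresentedGroup.of (rels := raagRels Θ) t.1) (PresentedGroup.of t.1)⁻¹

theorem raag_adj_commute (Θ : SimpleGraph V) {v w : V} (h : Θ.Adj v w) :
    Commute (PresentedGroup.of (rels := raagRels Θ) v) (PresentedGroup.of w) := by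
  rw [← commutatorElement_eq_one_iff_commute, commutatorElement_def]
  have hr : (FreeGroup.of v * FreeGroup.of w * (FreeGroup.of v)⁻¹ * (FreeGroup.of w)⁻¹)
      ∈ raagRels Θ := ⟨v, w, h, rfl⟩
  have h1 : ((QuotientGroup.mk (FreeGroup.of v * FreeGroup.of w * (FreeGroup.of v)⁻¹ *
      (FreeGroup.of w)⁻¹) : PresentedGroup (raagRels Θ))) = 1 :=
    (QuotientGroup.eq_one_iff _).mpr (Subgroup.subset_normalClosure hr)
  simp only [QuotientGroup.mk_mul, QuotientGroup.mk_inv] at h1; exact h1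

theorem raag_hcomm (Θ : SimpleGraph V) :
    ∀ p q : V × Bool, NbG Θ p.1 q.1 = false →
      raagLtr Θ p * raagLtr Θ q = raagLtr Θ q * raagLtr Θ p := by
  intro p q hpq
  have hC : Commute (PresentedGroup.of (rels := raagRels Θ) p.1) (PresentedGroup.of q.1) := by
    rw [NbG_false_iff, SimpleGraph.compl_adj] at hpq
    push_neg at hpq
    rcases Classical.em (p.1 = q.1) with h | h
    · rw [h]
    · exact raag_adj_commute Θ (hpq h)
  cases hp : p.2 <;> cases hq : q.2 <;> simp only [raagLtr, hp, hq, cond_true, cond_false]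
  · exact (hC.inv_left.inv_right).eq
  · exact (hC.inv_left).eq
  · exact (hC.inv_right).eq
  · exact hC.eq

theorem list_lift (Θ : SimpleGraph V) :
    ∀ L : List (RAAG Θ), (∀ t ∈ L, t ∈ raagGens Θ ∪ (raagGens Θ)⁻¹) →
      ∃ w : List (V × Bool), w.length = L.length ∧ wprod (raagLtr Θ) w = L.prod := by
  intro L
  induction L with
  | nil => intro _; exact ⟨[], rfl, rfl⟩
  | cons t L ih =>
    intro h
    obtain ⟨w, hw1, hw2⟩ := ih fun x hx => h x (List.mem_cons_of_mem _ hx)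
    rcases h t List.mem_cons_self with ht | ht
    · obtain ⟨v, hv⟩ := ht
      refine ⟨(v, true) :: w, by simp [hw1], ?_⟩
      simp only [wprod, List.map_cons, List.prod_cons, List.prod_cons] at *
      simp [raagLtr, hv, hw2]
    · rw [Set.mem_inv] at ht
      obtain ⟨v, hv⟩ := ht
      refine ⟨(v, false) :: w, by simp [hw1], ?_⟩
      simp only [wprod, List.map_cons, List.prod_cons, List.prod_cons] at *
      have : (PresentedGroup.of (rels := raagRels Θ) v)⁻¹ = t := by rw [hv]; simp
      simp [raagLtr, this, hw2]

theorem exists_word (Θ : SimpleGraph V) (R : ℕ) (g : RAAG Θ) (hg : g ∈ ball (raagGens Θ) R) :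
    ∃ w : List (V × Bool), w.length ≤ R ∧ wprod (raagLtr Θ) w = g := by
  obtain ⟨L, hlen, hmem, hprod⟩ := hg
  obtain ⟨w, hw1, hw2⟩ := list_lift Θ L hmem
  exact ⟨w, hw1 ▸ hlen, hw2.trans hprod⟩

end RAAG

end RaagProof
/-- If the complementary graph of `Θ` has maximum degree at most `c₀`, then the ball of
radius `R` in `A(Θ)` injects into `W_R(n, c₀)`, where `n = #V`. -/
theorem ball_raag_injects_into_WSet {V : Type*} [Fintype V] (Θ : SimpleGraph V)
    (n c₀ : ℕ) (hn : n = Fintype.card V) (hn1 : 1 ≤ n) (hc : 1 ≤ c₀)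
    (hdeg : ∀ v : V, ((Θᶜ).neighborSet v).ncard ≤ c₀)
    (R : ℕ) (hR : 1 ≤ R) :
    (∃ f : (ball (raagGens Θ) R) → (WSet n c₀ R), Function.Injective f) ∧
    (ball (raagGens Θ) R).ncard ≤ (WSet n c₀ R).ncard := by
  classical
  letI : DecidableEq V := Classical.decEq V
  set Nb := RaagProof.NbG Θ with hNbdef
  set l₀ := (Finset.univ : Finset V).toList with hl₀
  have hnd₀ : l₀.Nodup := Finset.nodup_toList _
  have hcm₀ : ∀ x : V, x ∈ l₀ := fun x => by simp [hl₀, Finset.mem_toList]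
  have hln₀ : l₀.length = n := by rw [hl₀, Finset.length_toList, hn]; rfl
  have Hirr : ∀ v, Nb v v = false := RaagProof.NbG_irrefl Θ
  have HD : ∀ (v : V) (l : List V), l.Nodup → (l.filter fun u => Nb v u).length ≤ c₀ := by
    intro v l hnd
    have h1 : (l.filter fun u => Nb v u).Nodup := hnd.filter _
    have hsub : (((l.filter fun u => Nb v u).toFinset : Finset V) : Set V)
        ⊆ Θᶜ.neighborSet v := by
      intro x hx
      have hx' : x ∈ l.filter fun u => Nb v u := by
        simpa using hx
      exact (RaagProof.NbG_true_iff Θ v x).mp (List.mem_filter.mp hx').2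
    calc (l.filter fun u => Nb v u).length
        = (l.filter fun u => Nb v u).toFinset.card := (List.toFinset_card_of_nodup h1).symm
      _ = (((l.filter fun u => Nb v u).toFinset : Finset V) : Set V).ncard :=
          (Set.ncard_coe_finset _).symm
      _ ≤ (Θᶜ.neighborSet v).ncard := Set.ncard_le_ncard hsub (Set.toFinite _)
      _ ≤ c₀ := hdeg v
  -- the encoding
  set wd : ∀ g ∈ ball (raagGens Θ) R, List (V × Bool) :=
    fun g hg => (RaagProof.exists_word Θ R g hg).choose with hwddef
  set E : RAAG Θ → List ℤ := fun g =>
    if hg : g ∈ ball (raagGens Θ) R then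
      RaagProof.encList Nb c₀ l₀ 0 (RaagProof.greedy Nb l₀ (wd g hg))
    else [] with hEdef
  set pad : ℤ := (n : ℤ) + c₀ * R + 1 with hpaddef
  set Φ : RAAG Θ → (Fin R → ℤ) := fun g i =>
    if h : (i : ℕ) < (E g).length then (E g).get ⟨i, h⟩ else pad with hΦdef
  have hpadpos : (0 : ℤ) ≤ (n : ℤ) + c₀ * R := by positivity
  -- key facts about E on the ball
  have hE : ∀ g (hg : g ∈ ball (raagGens Θ) R),
      (E g).length ≤ R ∧ (∀ x ∈ E g, 1 ≤ |x| ∧ |x| ≤ (n : ℤ) + c₀ * R) ∧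
      List.IsChain (fun x y : ℤ => |x| ≤ |y|) (E g) := by
    intro g hg
    obtain ⟨hwlen, hwprod⟩ := (RaagProof.exists_word Θ R g hg).choose_spec
    have hEg : E g = RaagProof.encList Nb c₀ l₀ 0 (RaagProof.greedy Nb l₀ (wd g hg)) := by
      rw [hEdef]; exact dif_pos hg
    have hglen : (RaagProof.greedy Nb l₀ (wd g hg)).length = (wd g hg).length :=
      RaagProof.greedy_length Nb l₀ (wd g hg)
    have hlenE : (E g).length = (wd g hg).length := by
      rw [hEg, RaagProof.encList_length, hglen]
    refine ⟨by rw [hlenE]; exact hwlen, ?_, ?_⟩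
    · intro x hx
      rw [hEg] at hx
      have hb := RaagProof.encList_bounds Nb c₀ n (RaagProof.greedy Nb l₀ (wd g hg))
        l₀ 0 hnd₀ hcm₀ hln₀ x hx
      refine ⟨hb.1, le_trans hb.2 ?_⟩
      have hlen2 : (RaagProof.greedy Nb l₀ (wd g hg)).length ≤ R := by
        rw [hglen]; exact hwlen
      have hmul : (c₀ : ℤ) * ((0 : ℕ) + (RaagProof.greedy Nb l₀ (wd g hg)).length : ℕ)
          ≤ (c₀ : ℤ) * R := by
        apply mul_le_mul_of_nonneg_left _ (by positivity)
        exact_mod_cast by omega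
      push_cast at hmul ⊢
      linarith
    · rw [hEg]
      exact RaagProof.greedy_chain Nb c₀ HD Hirr (wd g hg).length (wd g hg) l₀ 0
        le_rfl hnd₀ hcm₀
  -- Φ maps the ball into WSet
  have hmaps : ∀ g ∈ ball (raagGens Θ) R, Φ g ∈ WSet n c₀ R := by
    intro g hg
    obtain ⟨hlenR, hbd, hch⟩ := hE g hg
    haveI : IsTrans ℤ (fun x y : ℤ => |x| ≤ |y|) := ⟨fun _ _ _ => le_trans⟩
    have hpw := List.pairwise_iff_get.mp (List.isChain_iff_pairwise.mp hch)
    constructor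
    · intro i
      by_cases h : (i : ℕ) < (E g).length
      · have hm := hbd _ (List.get_mem (E g) ⟨(i : ℕ), h⟩)
        rw [hΦdef]
        simp only [dif_pos h]
        exact Or.inl hm
      · rw [hΦdef]
        simp only [dif_neg h]
        exact Or.inr (by rw [hpaddef])
    · intro i j hij
      by_cases hj : (j : ℕ) < (E g).length
      · have hi : (i : ℕ) < (E g).length := lt_of_le_of_lt (by exact_mod_cast hij) hj
        rw [hΦdef]
        simp only [dif_pos hi, dif_pos hj]
        rcases lt_or_eq_of_le (show (i : ℕ) ≤ (j : ℕ) from hij) with hlt | heq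
        · exact hpw ⟨i, hi⟩ ⟨j, hj⟩ (by exact hlt)
        · have : (⟨(i : ℕ), hi⟩ : Fin (E g).length) = ⟨(j : ℕ), hj⟩ := by
            simp [heq]
          rw [this]
      · rw [hΦdef]
        simp only [dif_neg hj]
        by_cases hi : (i : ℕ) < (E g).length
        · simp only [dif_pos hi]
          have hm := hbd _ (List.get_mem (E g) ⟨(i : ℕ), hi⟩)
          have : |pad| = (n : ℤ) + c₀ * R + 1 := by
            rw [hpaddef]; exact abs_of_nonneg (by linarith)
          rw [this]
          linarith [hm.2]
        · simp only [dif_neg hi]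
          exact le_refl _
  -- injectivity on the ball
  have hinj : Set.InjOn Φ (ball (raagGens Θ) R) := by
    have contra : ∀ g₁ g₂, g₁ ∈ ball (raagGens Θ) R → g₂ ∈ ball (raagGens Θ) R →
        Φ g₁ = Φ g₂ → (E g₁).length < (E g₂).length → False := by
      intro g₁ g₂ hg₁ hg₂ hΦeq hlt
      set i : Fin R := ⟨(E g₁).length, lt_of_lt_of_le hlt (hE g₂ hg₂).1⟩ with hidef
      have h1 : Φ g₁ i = pad := by
        rw [hΦdef]; exact dif_neg (by simp [hidef])
      have h2 : Φ g₂ i = (E g₂).get ⟨(E g₁).length, hlt⟩ := by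
        rw [hΦdef]; exact dif_pos hlt
      have hm := (hE g₂ hg₂).2.1 _ (List.get_mem (E g₂) ⟨(E g₁).length, hlt⟩)
      rw [← h2, ← hΦeq, h1, hpaddef] at hm
      have := hm.2
      rw [abs_of_nonneg (by linarith)] at this
      linarith
    intro g₁ hg₁ g₂ hg₂ hΦeq
    have hlen : (E g₁).length = (E g₂).length := by
      rcases Nat.lt_trichotomy (E g₁).length (E g₂).length with h | h | h
      · exact absurd (contra g₁ g₂ hg₁ hg₂ hΦeq h) (fun x => x)
      · exact h
      · exact absurd (contra g₂ g₁ hg₂ hg₁ hΦeq.symm h) (fun x => x)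
    have hEeq : E g₁ = E g₂ := by
      apply List.ext_get hlen
      intro k h1 h2
      have hk : k < R := lt_of_lt_of_le h1 (hE g₁ hg₁).1
      have := congrFun hΦeq ⟨k, hk⟩
      rw [hΦdef] at this
      simp only [dif_pos h1, dif_pos h2] at this
      exact this
    have hd₁ : E g₁ = RaagProof.encList Nb c₀ l₀ 0 (RaagProof.greedy Nb l₀ (wd g₁ hg₁)) := by
      rw [hEdef]; exact dif_pos hg₁
    have hd₂ : E g₂ = RaagProof.encList Nb c₀ l₀ 0 (RaagProof.greedy Nb l₀ (wd g₂ hg₂)) := by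
      rw [hEdef]; exact dif_pos hg₂
    have hgw : RaagProof.greedy Nb l₀ (wd g₁ hg₁) = RaagProof.greedy Nb l₀ (wd g₂ hg₂) :=
      RaagProof.encList_inj Nb c₀ _ _ l₀ 0 hnd₀ hcm₀ (by rw [← hd₁, ← hd₂, hEeq])
    have hp₁ := (RaagProof.exists_word Θ R g₁ hg₁).choose_spec.2
    have hp₂ := (RaagProof.exists_word Θ R g₂ hg₂).choose_spec.2
    have hgp₁ := RaagProof.greedy_wprod Nb (RaagProof.raagLtr Θ) (RaagProof.raag_hcomm Θ)
      l₀ (wd g₁ hg₁)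
    have hgp₂ := RaagProof.greedy_wprod Nb (RaagProof.raagLtr Θ) (RaagProof.raag_hcomm Θ)
      l₀ (wd g₂ hg₂)
    calc g₁ = RaagProof.wprod (RaagProof.raagLtr Θ) (wd g₁ hg₁) := hp₁.symm
      _ = RaagProof.wprod (RaagProof.raagLtr Θ) (RaagProof.greedy Nb l₀ (wd g₁ hg₁)) :=
          hgp₁.symm
      _ = RaagProof.wprod (RaagProof.raagLtr Θ) (RaagProof.greedy Nb l₀ (wd g₂ hg₂)) := by
          rw [hgw]
      _ = RaagProof.wprod (RaagProof.raagLtr Θ) (wd g₂ hg₂) := hgp₂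
      _ = g₂ := hp₂
  -- finiteness of WSet
  have hDfin : (DSet n c₀ R).Finite := by
    apply Set.Finite.subset (Set.finite_Icc (-((n : ℤ) + c₀ * R + 1)) ((n : ℤ) + c₀ * R + 1))
    intro x hx
    rcases hx with ⟨h1, h2⟩ | h
    · rw [Set.mem_Icc]
      constructor
      · linarith [neg_abs_le x]
      · linarith [le_abs_self x]
    · subst h; rw [Set.mem_Icc]; constructor <;> linarith
  have hWfin : (WSet n c₀ R).Finite := by
    apply Set.Finite.subset (Set.Finite.pi fun _ : Fin R => hDfin)
    intro ℓ hℓ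
    exact Set.mem_pi.mpr fun i _ => hℓ.1 i
  refine ⟨⟨fun x => ⟨Φ x.1, hmaps x.1 x.2⟩, ?_⟩, ?_⟩
  · intro x y hxy
    apply Subtype.ext
    exact hinj x.2 y.2 (congrArg Subtype.val hxy)
  · exact Set.ncard_le_ncard_of_injOn Φ hmaps hinj hWfin
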